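/- Let μ be a measure on S × S, where S := AddCircle ℝ 1. For a, b ∈ S put Link(a,b) := {(c,d) ∈ S × S : (sbtw a c b ∧ sbtw b d a) ∨ (sbtw a d b ∧ sbtw b c a)}, and call the pair (a,b) μ-short if μ(Link(a,b)) = 0. Let n ≥ 1 and let x₀, x₁, …, xₙ ∈ S be in strict circular order (sbtw xᵢ xⱼ xₖ whenever i < j < k). Assume that (xᵢ, xᵢ₊₁) is μ-short for every 0 ≤ i < n, and that μ gives zero mass to the pencil at each intermediate vertex: μ({xᵢ} × S) = 0 and μ(S × {xᵢ}) = 0 for every 0 < i < n. Then (x₀, xₙ) is μ-short. -/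

import Mathlib

/- STATEMENT 10: Let μ be a measure on S × S, S := AddCircle ℝ 1. For a, b ∈ S put
Link(a,b) := {(c,d) : (sbtw a c b ∧ sbtw b d a) ∨ (sbtw a d b ∧ sbtw b c a)}; call
(a,b) μ-short if μ(Link(a,b)) = 0. Let n ≥ 1 and x₀, …, xₙ ∈ S in strict circular
order, with (xᵢ, xᵢ₊₁) μ-short for every 0 ≤ i < n and the pencils at the intermediate
vertices μ-null. Then (x₀, xₙ) is μ-short. -/

theorem Real.fact_zero_lt_one : Fact ((0 : ℝ) < 1) :=
  ⟨one_pos⟩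

attribute [local instance] Real.fact_zero_lt_one

open MeasureTheory

noncomputable section

/-- The circle ℝ/ℤ. -/
abbrev Circle' : Type := AddCircle (1 : ℝ)

/-- The set of ordered pairs `(c,d)` linking the pair `(a,b)`: such pairs are the
endpoints of geodesics transversally intersecting the geodesic with endpoints `a, b`. -/
def linkSet (a b : Circle') : Set (Circle' × Circle') :=
  {p | (sbtw a p.1 b ∧ sbtw b p.2 a) ∨ (sbtw a p.2 b ∧ sbtw b p.1 a)}

section aux

variable {α : Type*}

lemma my_sbtw_ne12 [CircularPreorder α] {a b c : α} (h : sbtw a b c) : a ≠ b := by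
  rintro rfl; exact sbtw_irrefl_left h

lemma my_sbtw_ne23 [CircularPreorder α] {a b c : α} (h : sbtw a b c) : b ≠ c := by
  rintro rfl; exact sbtw_irrefl_right h

/-- Trichotomy: a point `c` strictly inside the arc from `a` to `b` is either equal to a
marked point `m` of that arc, or strictly inside one of the two subarcs. -/
lemma my_tri [CircularOrder α] {a b c m : α} (hc : sbtw a c b) (hm : sbtw a m b) :
    c = m ∨ sbtw a c m ∨ sbtw m c b := by
  by_cases hcm : c = m
  · exact Or.inl hcm
  by_cases h1 : sbtw a c m
  · exact Or.inr (Or.inl h1)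
  by_cases h2 : sbtw m c b
  · exact Or.inr (Or.inr h2)
  exfalso
  -- from ¬ sbtw a c m we get btw m c a, hence sbtw m c a
  have hbmca : btw m c a := by
    have := sbtw_iff_not_btw (a := a) (b := c) (c := m)
    tauto
  have hsmca : sbtw m c a := by
    refine sbtw_iff_btw_not_btw.2 ⟨hbmca, fun hacm => ?_⟩
    rcases btw_antisymm hacm hbmca with h | h | h
    · exact my_sbtw_ne12 hc h
    · exact hcm h
    · exact my_sbtw_ne12 hm h.symm
  -- from ¬ sbtw m c b we get btw b c m, hence sbtw b c m
  have hbbcm : btw b c m := by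
    have := sbtw_iff_not_btw (a := m) (b := c) (c := b)
    tauto
  have hsbcm : sbtw b c m := by
    refine sbtw_iff_btw_not_btw.2 ⟨hbbcm, fun hmcb => ?_⟩
    rcases btw_antisymm hmcb hbbcm with h | h | h
    · exact hcm h.symm
    · exact my_sbtw_ne23 hc h
    · exact my_sbtw_ne23 hm h.symm
  -- combine to contradict `sbtw a c b`
  have h3 : sbtw c a m := hsmca.cyclic_left
  have h4 : sbtw c m b := hsbcm.cyclic_left
  have h5 : sbtw c a b := sbtw_trans_right h3 h4
  exact sbtw_asymm h5 hc.cyclic_right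

end aux

theorem diagonal_of_short_polygon_is_short
    (μ : Measure (Circle' × Circle')) (n : ℕ) (hn : 1 ≤ n)
    (x : Fin (n + 1) → Circle')
    (horder : ∀ i j k : Fin (n + 1), i < j → j < k → sbtw (x i) (x j) (x k))
    (hshort : ∀ i : Fin n, μ (linkSet (x i.castSucc) (x i.succ)) = 0)
    (hpencil : ∀ i : Fin (n + 1), 0 < i → i < Fin.last n →
      μ ({x i} ×ˢ (Set.univ : Set Circle')) = 0 ∧
      μ ((Set.univ : Set Circle') ×ˢ {x i}) = 0) :
    μ (linkSet (x 0) (x (Fin.last n))) = 0 := by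
  classical
  -- the bad sets
  set A : Set (Circle' × Circle') := ⋃ i : Fin n, linkSet (x i.castSucc) (x i.succ) with hA
  set B : Set (Circle' × Circle') := ⋃ i : Fin (n + 1),
    (if 0 < i ∧ i < Fin.last n then ({x i} ×ˢ (Set.univ : Set Circle')) ∪
      ((Set.univ : Set Circle') ×ˢ {x i}) else ∅) with hB
  have hμA : μ A = 0 := measure_iUnion_null hshort
  have hμB : μ B = 0 := by
    refine measure_iUnion_null fun i => ?_
    by_cases h : 0 < i ∧ i < Fin.last n
    · rw [if_pos h]
      exact measure_union_null (hpencil i h.1 h.2).1 (hpencil i h.1 h.2).2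
    · rw [if_neg h]; simp
  -- key lemma about the second coordinate
  have hd : ∀ z : Circle', sbtw (x (Fin.last n)) z (x 0) →
      ∀ i : Fin n, sbtw (x i.succ) z (x i.castSucc) := by
    intro z hz i
    by_cases hb : i.succ = Fin.last n
    · by_cases ha : i.castSucc = 0
      · rw [hb, ha]; exact hz
      · have h0 : (0 : Fin (n + 1)) < i.castSucc := Fin.pos_of_ne_zero ha
        have h2 : sbtw (x 0) (x i.castSucc) (x (Fin.last n)) :=
          horder _ _ _ h0 (hb ▸ Fin.castSucc_lt_succ (i := i))
        rw [hb]
        exact sbtw_trans_right hz h2.cyclic_right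
    · have hbl : i.succ < Fin.last n := lt_of_le_of_ne (Fin.le_last _) hb
      have h1 : sbtw (x 0) (x i.succ) (x (Fin.last n)) :=
        horder _ _ _ (Fin.succ_pos i) hbl
      have hBd : sbtw (x i.succ) z (x 0) := sbtw_trans_left h1.cyclic_left hz
      by_cases ha : i.castSucc = 0
      · rw [ha]; exact hBd
      · have h0 : (0 : Fin (n + 1)) < i.castSucc := Fin.pos_of_ne_zero ha
        have h3 : sbtw (x 0) (x i.castSucc) (x i.succ) :=
          horder _ _ _ h0 (Fin.castSucc_lt_succ (i := i))
        exact sbtw_trans_right hBd h3.cyclic_left.cyclic_left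
  -- key lemma about the first coordinate
  have hc : ∀ z : Circle', sbtw (x 0) z (x (Fin.last n)) →
      (∃ i : Fin (n + 1), 0 < i ∧ i < Fin.last n ∧ z = x i) ∨
      (∃ i : Fin n, sbtw (x i.castSucc) z (x i.succ)) := by
    have key : ∀ k : ℕ, ∀ hk1 : 1 ≤ k, ∀ hk : k ≤ n, ∀ z : Circle',
        sbtw (x 0) z (x ⟨k, by omega⟩) →
        (∃ i : Fin (n + 1), 0 < i ∧ i < Fin.last n ∧ z = x i) ∨
        (∃ i : Fin n, sbtw (x i.castSucc) z (x i.succ)) := by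
      intro k
      induction k with
      | zero => omega
      | succ k ih =>
        intro _ hk z hz
        by_cases hk1 : k = 0
        · subst hk1
          refine Or.inr ⟨⟨0, by omega⟩, ?_⟩
          have e1 : Fin.castSucc (⟨0, by omega⟩ : Fin n) = (0 : Fin (n + 1)) := rfl
          have e2 : Fin.succ (⟨0, by omega⟩ : Fin n) = (⟨1, by omega⟩ : Fin (n + 1)) := rfl
          rw [e1, e2]; exact hz
        · have hm : sbtw (x 0) (x ⟨k, by omega⟩) (x ⟨k + 1, by omega⟩) :=
            horder _ _ _ (by simp [Fin.lt_def]; omega) (by simp [Fin.lt_def])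
          rcases my_tri hz hm with h | h | h
          · exact Or.inl ⟨⟨k, by omega⟩, by simp [Fin.lt_def]; omega,
              by simp [Fin.lt_def, Fin.last]; omega, h⟩
          · exact ih (by omega) (by omega) z h
          · refine Or.inr ⟨⟨k, by omega⟩, ?_⟩
            have e1 : Fin.castSucc (⟨k, by omega⟩ : Fin n) = (⟨k, by omega⟩ : Fin (n + 1)) := rfl
            have e2 : Fin.succ (⟨k, by omega⟩ : Fin n) = (⟨k + 1, by omega⟩ : Fin (n + 1)) := rfl
            rw [e1, e2]; exact h
    intro z hz
    have hlast : (Fin.last n : Fin (n + 1)) = ⟨n, by omega⟩ := rfl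
    exact key n hn le_rfl z (by rw [hlast] at hz; exact hz)
  -- inclusion into the union of bad sets
  have hsub : linkSet (x 0) (x (Fin.last n)) ⊆ A ∪ B := by
    rintro ⟨c, d⟩ (⟨h1, h2⟩ | ⟨h1, h2⟩)
    · rcases hc c h1 with ⟨i, hi0, hil, rfl⟩ | ⟨i, hci⟩
      · refine Or.inr (Set.mem_iUnion.2 ⟨i, ?_⟩)
        rw [if_pos ⟨hi0, hil⟩]
        exact Or.inl ⟨rfl, trivial⟩
      · exact Or.inl (Set.mem_iUnion.2 ⟨i, Or.inl ⟨hci, hd d h2 i⟩⟩)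
    · rcases hc d h1 with ⟨i, hi0, hil, rfl⟩ | ⟨i, hdi⟩
      · refine Or.inr (Set.mem_iUnion.2 ⟨i, ?_⟩)
        rw [if_pos ⟨hi0, hil⟩]
        exact Or.inr ⟨trivial, rfl⟩
      · exact Or.inl (Set.mem_iUnion.2 ⟨i, Or.inr ⟨hdi, hd c h2 i⟩⟩)
  exact measure_mono_null hsub (measure_union_null hμA hμB)
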